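/- Let σ ⊆ R^d be a convex polyhedral cone and γ a face of σ. Then the dual cone of γ satisfies γ^∨ = σ^∨ + γ^⊥, where γ^∨ = {y ∈ (R^d)* : y(x) ≥ 0 for all x ∈ γ}, σ^∨ is the dual of σ, and γ^⊥ = {y : y(x) = 0 for all x ∈ γ}. -/

import Mathlib

open scoped Pointwise

/-- The dual cone of a set `S` in Euclidean space. -/
def dualSet {d : ℕ} (S : Set (EuclideanSpace ℝ (Fin d))) : Set (EuclideanSpace ℝ (Fin d)) :=
  {y | ∀ x ∈ S, 0 ≤ (inner ℝ y x : ℝ)}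

/-- The annihilator `S^⊥` of a set `S`. -/
def perpSet {d : ℕ} (S : Set (EuclideanSpace ℝ (Fin d))) : Set (EuclideanSpace ℝ (Fin d)) :=
  {y | ∀ x ∈ S, (inner ℝ y x : ℝ) = 0}

/-- `σ` is a (closed convex) polyhedral cone: the set of nonnegative combinations of
finitely many generators. -/
def IsPolyCone {d : ℕ} (σ : Set (EuclideanSpace ℝ (Fin d))) : Prop :=
  ∃ (m : ℕ) (g : Fin m → EuclideanSpace ℝ (Fin d)),
    σ = {x | ∃ c : Fin m → ℝ, (∀ i, 0 ≤ c i) ∧ x = ∑ i, c i • g i}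

/-- `γ` is a face of `σ`: the intersection of `σ` with a supporting hyperplane. -/
def IsFaceOf {d : ℕ} (σ γ : Set (EuclideanSpace ℝ (Fin d))) : Prop :=
  ∃ u ∈ dualSet σ, γ = σ ∩ {x | (inner ℝ u x : ℝ) = 0}

/-- For a face `γ` of a polyhedral cone `σ`, the dual cone of `γ` satisfies
`γ^∨ = σ^∨ + γ^⊥` (Minkowski sum). -/
theorem dual_of_face {d : ℕ} (σ γ : Set (EuclideanSpace ℝ (Fin d)))
    (hσ : IsPolyCone σ) (hγ : IsFaceOf σ γ) :
    dualSet γ = dualSet σ + perpSet γ := by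
  obtain ⟨m, g, hg⟩ := hσ
  obtain ⟨u, hu, hγ'⟩ := hγ
  ext y
  constructor
  · intro hy
    -- each generator lies in σ
    have hgσ : ∀ i, g i ∈ σ := by
      intro i
      rw [hg]
      refine ⟨fun j => if j = i then 1 else 0, fun j => by positivity, ?_⟩
      simp [ite_smul]
    have hu_i : ∀ i, 0 ≤ (inner ℝ u (g i) : ℝ) := fun i => hu _ (hgσ i)
    set T : Fin m → ℝ := fun i =>
      if 0 < (inner ℝ u (g i) : ℝ) then max 0 (-(inner ℝ y (g i) : ℝ) / (inner ℝ u (g i) : ℝ))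
      else 0 with hT
    set t : ℝ := ∑ i, T i with htdef
    have hT_nonneg : ∀ i, 0 ≤ T i := by
      intro i
      simp only [hT]
      split <;> simp
    have ht_nonneg : 0 ≤ t := Finset.sum_nonneg fun i _ => hT_nonneg i
    have hti : ∀ i, T i ≤ t := fun i =>
      Finset.single_le_sum (fun j _ => hT_nonneg j) (Finset.mem_univ i)
    have key : ∀ i, 0 ≤ (inner ℝ y (g i) : ℝ) + t * (inner ℝ u (g i) : ℝ) := by
      intro i
      by_cases hpos : 0 < (inner ℝ u (g i) : ℝ)
      · have hTi : T i = max 0 (-(inner ℝ y (g i) : ℝ) / (inner ℝ u (g i) : ℝ)) := by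
          rw [hT]; exact if_pos hpos
        have h1 : -(inner ℝ y (g i) : ℝ) / (inner ℝ u (g i) : ℝ) ≤ t :=
          le_trans (le_max_right 0 _) (le_trans (le_of_eq hTi.symm) (hti i))
        have := (div_le_iff₀ hpos).mp h1
        linarith
      · have hz : (inner ℝ u (g i) : ℝ) = 0 := le_antisymm (not_lt.mp hpos) (hu_i i)
        have hγi : g i ∈ γ := by
          rw [hγ']
          exact ⟨hgσ i, hz⟩
        have := hy _ hγi
        rw [hz]
        linarith
    have h1 : y + t • u ∈ dualSet σ := by
      intro x hx
      rw [hg] at hx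
      obtain ⟨c, hc0, rfl⟩ := hx
      rw [inner_sum]
      refine Finset.sum_nonneg fun i _ => ?_
      rw [real_inner_smul_right, inner_add_left, real_inner_smul_left]
      exact mul_nonneg (hc0 i) (key i)
    have h2 : -(t • u) ∈ perpSet γ := by
      intro x hx
      rw [hγ'] at hx
      rw [inner_neg_left, real_inner_smul_left, hx.2, mul_zero, neg_zero]
    have hyeq : y = (y + t • u) + (-(t • u)) := by abel
    rw [hyeq]
    exact Set.add_mem_add h1 h2
  · rintro ⟨a, ha, b, hb, rfl⟩
    intro x hx
    have hxσ : x ∈ σ := by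
      rw [hγ'] at hx; exact hx.1
    rw [inner_add_left, hb x hx]
    simpa using ha x hxσ
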